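/- Let 0 < m < m_T. Then the wavelike parametrization γ_w(·|m) is injective on all of ℝ; in particular it has no self-intersection. -/

import Mathlib

open Real MeasureTheory Set

noncomputable section

abbrev E2 := EuclideanSpace ℝ (Fin 2)

/-- The point of the Euclidean plane with coordinates `(a, b)`. -/
def mkE2 (a b : ℝ) : E2 := WithLp.toLp 2 ![a, b]
/-- Incomplete elliptic integral of the first kind `F(x,m)`. -/
def Fell (x m : ℝ) : ℝ := ∫ θ in (0:ℝ)..x, 1 / Real.sqrt (1 - m * Real.sin θ ^ 2)

/-- Incomplete elliptic integral of the second kind `E(x,m)`. -/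
def Eell (x m : ℝ) : ℝ := ∫ θ in (0:ℝ)..x, Real.sqrt (1 - m * Real.sin θ ^ 2)

/-- Complete elliptic integral of the first kind `K(m)`. -/
def Kc (m : ℝ) : ℝ := Fell (Real.pi / 2) m

/-- Complete elliptic integral of the second kind `E(m)`. -/
def Ec (m : ℝ) : ℝ := Eell (Real.pi / 2) m

/-- `α(m) = arcsin √(1/(2m))`. -/
def alph (m : ℝ) : ℝ := Real.arcsin (Real.sqrt (1 / (2 * m)))

/-- `G(x,m) = ∫₀ˣ (1 − 2m sin²θ)(1 − m sin²θ)^{−1/2} dθ = 2E(x,m) − F(x,m)`. -/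
def Gw (x m : ℝ) : ℝ :=
  ∫ θ in (0:ℝ)..x, (1 - 2 * m * Real.sin θ ^ 2) / Real.sqrt (1 - m * Real.sin θ ^ 2)

/-- `f(m) = ∫₀^{π−α(m)} (1 − 2m sin²θ)(1 − m sin²θ)^{−1/2} dθ`; its unique zero is `m_T`. -/
def fT (m : ℝ) : ℝ := Gw (Real.pi - alph m) m
/-- The wavelike parametrization `γ_w(x|m) = (G(x,m), −2√m cos x)`. -/
def gammaW (m : ℝ) : ℝ → E2 := fun x => mkE2 (Gw x m) (-2 * Real.sqrt m * Real.cos x)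


/-- integrand -/
def s11ig (m θ : ℝ) : ℝ := (1 - 2 * m * Real.sin θ ^ 2) / Real.sqrt (1 - m * Real.sin θ ^ 2)

lemma s11_denom_pos {m : ℝ} (hm0 : 0 ≤ m) (hm1 : m < 1) (θ : ℝ) :
    0 < 1 - m * Real.sin θ ^ 2 := by
  nlinarith [Real.sin_sq_le_one θ, sq_nonneg (Real.sin θ)]

lemma s11ig_cont {m : ℝ} (hm0 : 0 ≤ m) (hm1 : m < 1) : Continuous (s11ig m) := by
  apply Continuous.div (by fun_prop) (by fun_prop)
  intro θ
  exact (Real.sqrt_pos.mpr (s11_denom_pos hm0 hm1 θ)).ne'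

lemma s11ig_int {m : ℝ} (hm0 : 0 ≤ m) (hm1 : m < 1) (a b : ℝ) :
    IntervalIntegrable (s11ig m) volume a b :=
  (s11ig_cont hm0 hm1).intervalIntegrable a b

lemma s11ig_periodic (m : ℝ) : Function.Periodic (s11ig m) Real.pi := by
  intro θ; simp [s11ig, Real.sin_add_pi, neg_sq]

lemma s11ig_even (m θ : ℝ) : s11ig m (-θ) = s11ig m θ := by
  simp [s11ig, Real.sin_neg, neg_sq]

lemma Gw_eq (x m : ℝ) : Gw x m = ∫ θ in (0:ℝ)..x, s11ig m θ := rfl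

lemma s11ig_pos {m θ : ℝ} (hm0 : 0 ≤ m) (hm1 : m < 1)
    (h : m * Real.sin θ ^ 2 < 1/2) : 0 < s11ig m θ := by
  apply div_pos (by linarith) (Real.sqrt_pos.mpr (s11_denom_pos hm0 hm1 θ))

lemma s11ig_nonneg {m θ : ℝ} (h : m * Real.sin θ ^ 2 ≤ 1/2) : 0 ≤ s11ig m θ :=
  div_nonneg (by linarith) (Real.sqrt_nonneg _)

lemma s11ig_nonpos {m θ : ℝ} (h : 1/2 ≤ m * Real.sin θ ^ 2) : s11ig m θ ≤ 0 :=
  div_nonpos_of_nonpos_of_nonneg (by linarith) (Real.sqrt_nonneg _)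

/-- strict monotonicity in `m` -/
lemma s11ig_lt {m m' θ : ℝ} (hm0 : 0 ≤ m) (hmm' : m < m') (hm'1 : m' < 1)
    (hs : 0 < Real.sin θ ^ 2) : s11ig m' θ < s11ig m θ := by
  have hm1 : m < 1 := hmm'.trans hm'1
  have hb : 0 < 1 - m' * Real.sin θ ^ 2 := s11_denom_pos (hm0.trans hmm'.le) hm'1 θ
  have hab : 1 - m' * Real.sin θ ^ 2 < 1 - m * Real.sin θ ^ 2 := by nlinarith
  set a := 1 - m * Real.sin θ ^ 2 with ha_def
  set b := 1 - m' * Real.sin θ ^ 2 with hb_def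
  set p := Real.sqrt a with hp_def
  set q := Real.sqrt b with hq_def
  have hq : 0 < q := Real.sqrt_pos.mpr hb
  have hpq : q < p := Real.sqrt_lt_sqrt hb.le hab
  have hp2 : p ^ 2 = a := Real.sq_sqrt (hb.le.trans hab.le)
  have hq2 : q ^ 2 = b := Real.sq_sqrt hb.le
  have e1 : s11ig m θ = (2 * p ^ 2 - 1) / p := by
    rw [s11ig, hp2]; congr 1; ring
  have e2 : s11ig m' θ = (2 * q ^ 2 - 1) / q := by
    rw [s11ig, hq2]; congr 1; ring
  rw [e1, e2, div_lt_div_iff₀ hq (hq.trans hpq)]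
  nlinarith [mul_pos (sub_pos.mpr hpq) (mul_pos hq (hq.trans hpq))]

section G
variable {m : ℝ} (hm0 : 0 ≤ m) (hm1 : m < 1)

include hm0 hm1

lemma Gw_add_pi (x : ℝ) : Gw (x + Real.pi) m = Gw x m + Gw Real.pi m := by
  rw [Gw_eq, Gw_eq, Gw_eq,
    ← intervalIntegral.integral_add_adjacent_intervals (s11ig_int hm0 hm1 0 x) (s11ig_int hm0 hm1 x (x + Real.pi))]
  congr 1
  simpa using (s11ig_periodic m).intervalIntegral_add_eq x 0

omit hm0 hm1 in
lemma Gw_neg (x : ℝ) : Gw (-x) m = - Gw x m := by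
  rw [Gw_eq, Gw_eq, ← intervalIntegral.integral_symm,
    ← neg_zero, ← intervalIntegral.integral_comp_neg (fun θ => s11ig m θ)]
  simp [s11ig_even]

lemma Gw_add_int_pi (k : ℤ) (x : ℝ) :
    Gw (x + k * Real.pi) m = Gw x m + k * Gw Real.pi m := by
  induction k using Int.induction_on with
  | zero => simp
  | succ n ih =>
      have : x + ((n : ℤ) + 1 : ℤ) * Real.pi = (x + (n : ℤ) * Real.pi) + Real.pi := by
        push_cast; ring
      rw [this, Gw_add_pi hm0 hm1, ih]; push_cast; ring
  | pred n ih =>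
      have h2 : x + (-(n : ℤ) - 1 : ℤ) * Real.pi + Real.pi = x + (-(n : ℤ) : ℤ) * Real.pi := by
        push_cast; ring
      have := Gw_add_pi hm0 hm1 (x + (-(n : ℤ) - 1 : ℤ) * Real.pi)
      rw [h2, ih] at this
      push_cast at this ⊢
      linarith

end G

lemma s11_sinA {m : ℝ} (hm : 1/2 ≤ m) :
    Real.sin (alph m) = Real.sqrt (1 / (2 * m)) := by
  apply Real.sin_arcsin ((neg_nonpos.mpr zero_le_one).trans (Real.sqrt_nonneg _))
  rw [Real.sqrt_le_one]
  rw [div_le_one (by linarith)]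
  linarith

lemma s11_msinA {m : ℝ} (hm : 1/2 ≤ m) :
    m * Real.sin (alph m) ^ 2 = 1/2 := by
  rw [s11_sinA hm, Real.sq_sqrt (by positivity)]
  field_simp

lemma s11_A_pos {m : ℝ} (hm : 1/2 ≤ m) : 0 < alph m :=
  Real.arcsin_pos.mpr (Real.sqrt_pos.mpr (by positivity))

lemma s11_A_le {m : ℝ} : alph m ≤ Real.pi / 2 := Real.arcsin_le_pi_div_two _

lemma s11_sin_ge {a θ : ℝ} (ha0 : 0 ≤ a) (ha : a ≤ Real.pi / 2)
    (h1 : a ≤ θ) (h2 : θ ≤ Real.pi - a) : Real.sin a ≤ Real.sin θ := by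
  have hπ := Real.pi_pos
  rcases le_total θ (Real.pi / 2) with h | h
  · exact Real.strictMonoOn_sin.monotoneOn ⟨by linarith, ha⟩ ⟨by linarith, h⟩ h1
  · rw [← Real.sin_pi_sub θ]
    exact Real.strictMonoOn_sin.monotoneOn ⟨by linarith, ha⟩ ⟨by linarith, by linarith⟩
      (by linarith)

lemma s11_sin_le {a θ : ℝ} (ha0 : 0 ≤ a) (ha : a ≤ Real.pi / 2)
    (h1 : Real.pi - a ≤ θ) (h2 : θ ≤ Real.pi) : Real.sin θ ≤ Real.sin a := by
  have hπ := Real.pi_pos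
  rw [← Real.sin_pi_sub θ]
  exact Real.strictMonoOn_sin.monotoneOn ⟨by linarith, by linarith⟩ ⟨by linarith, ha⟩
    (by linarith)

/-- positivity of `f(m) = Gw (π - α(m)) m` for `1/2 ≤ m < m_T`. -/
lemma s11_fpos {m mq : ℝ} (hm : 1/2 ≤ m) (hmlt : m < mq) (hmq1 : mq < 1)
    (hz : fT mq = 0) : 0 < Gw (Real.pi - alph m) m := by
  have hπ := Real.pi_pos
  have hm0 : (0:ℝ) ≤ m := by linarith
  have hm1 : m < 1 := hmlt.trans hmq1
  have hmq0 : (0:ℝ) ≤ mq := by linarith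
  have hmqh : 1/2 ≤ mq := by linarith
  set A := alph m with hA
  set B := alph mq with hB
  have hA0 := s11_A_pos hm
  have hA2 : A ≤ Real.pi / 2 := s11_A_le
  have hB0 := s11_A_pos hmqh
  have hB2 : B ≤ Real.pi / 2 := s11_A_le
  have hBA : B ≤ A := by
    apply Real.monotone_arcsin
    apply Real.sqrt_le_sqrt
    rw [div_le_div_iff₀ (by linarith) (by linarith)]
    linarith
  have hmA := s11_msinA hm
  have hmB := s11_msinA hmqh
  -- step 1 : strict positivity of the difference integral
  have step1 : 0 < ∫ θ in (0:ℝ)..(Real.pi - A), (s11ig m θ - s11ig mq θ) := by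
    apply intervalIntegral.intervalIntegral_pos_of_pos_on
      ((s11ig_int hm0 hm1 _ _).sub (s11ig_int hmq0 hmq1 _ _))
    · rintro θ ⟨hθ0, hθ1⟩
      have hsθ : 0 < Real.sin θ := Real.sin_pos_of_pos_of_lt_pi hθ0 (by linarith)
      exact sub_pos.mpr (s11ig_lt hm0 hmlt hmq1 (by positivity))
    · linarith
  have step1' : 0 < Gw (Real.pi - A) m - Gw (Real.pi - A) mq := by
    rwa [intervalIntegral.integral_sub (s11ig_int hm0 hm1 _ _) (s11ig_int hmq0 hmq1 _ _),
      ← Gw_eq, ← Gw_eq] at step1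
  -- step 2 : the tail integral of `s11ig mq` is nonpositive
  have step2 : ∫ θ in (Real.pi - A)..(Real.pi - B), s11ig mq θ ≤ 0 := by
    rw [← neg_nonneg, ← intervalIntegral.integral_neg]
    apply intervalIntegral.integral_nonneg (by linarith)
    rintro θ ⟨hθ1, hθ2⟩
    rw [neg_nonneg]
    apply s11ig_nonpos
    have hsin : Real.sin B ≤ Real.sin θ :=
      s11_sin_ge hB0.le hB2 (by linarith) (by linarith)
    have hsB : 0 ≤ Real.sin B := Real.sin_nonneg_of_nonneg_of_le_pi hB0.le (by linarith)
    have hsq : Real.sin B ^ 2 ≤ Real.sin θ ^ 2 := pow_le_pow_left₀ hsB hsin 2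
    nlinarith [mul_le_mul_of_nonneg_left hsq hmq0]
  have adj : Gw (Real.pi - A) mq + (∫ θ in (Real.pi - A)..(Real.pi - B), s11ig mq θ)
      = Gw (Real.pi - B) mq := by
    rw [Gw_eq, Gw_eq]
    exact intervalIntegral.integral_add_adjacent_intervals
      (s11ig_int hmq0 hmq1 _ _) (s11ig_int hmq0 hmq1 _ _)
  have hfq : Gw (Real.pi - B) mq = 0 := hz
  linarith

/-- positivity of `Gw t m` for `t ∈ (0, π]`. -/
lemma s11_Gpos {m mq : ℝ} (hmq : mq ∈ Set.Ioo (1/2 : ℝ) 1) (hz : fT mq = 0)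
    (hm0 : 0 < m) (hm1 : m < mq) {t : ℝ} (ht0 : 0 < t) (htπ : t ≤ Real.pi) :
    0 < Gw t m := by
  have hπ := Real.pi_pos
  have hm1' : m < 1 := hm1.trans hmq.2
  have hm0' : (0:ℝ) ≤ m := hm0.le
  rcases lt_or_ge m (1/2) with hc | hc
  · rw [Gw_eq]
    apply intervalIntegral.intervalIntegral_pos_of_pos_on (s11ig_int hm0' hm1' _ _) _ ht0
    intro θ _
    apply s11ig_pos hm0' hm1'
    nlinarith [Real.sin_sq_le_one θ, sq_nonneg (Real.sin θ)]
  · set A := alph m with hA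
    have hA0 := s11_A_pos hc
    have hA2 : A ≤ Real.pi / 2 := s11_A_le
    have hmA := s11_msinA hc
    have hf : 0 < Gw (Real.pi - A) m := s11_fpos hc hm1 hmq.2 hz
    rcases le_or_gt t A with h1 | h1
    · rw [Gw_eq]
      apply intervalIntegral.intervalIntegral_pos_of_pos_on (s11ig_int hm0' hm1' _ _) _ ht0
      rintro θ ⟨hθ0, hθ1⟩
      apply s11ig_pos hm0' hm1'
      have hθA : θ < A := hθ1.trans_le h1
      have hsθ : 0 ≤ Real.sin θ :=
        Real.sin_nonneg_of_nonneg_of_le_pi hθ0.le (by linarith)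
      have hlt : Real.sin θ < Real.sin A :=
        Real.strictMonoOn_sin ⟨by linarith, by linarith⟩ ⟨by linarith, hA2⟩ hθA
      have hsq : Real.sin θ ^ 2 < Real.sin A ^ 2 := by nlinarith
      nlinarith [mul_lt_mul_of_pos_left hsq hm0]
    · rcases le_or_gt t (Real.pi - A) with h2 | h2
      · have adj : Gw t m + (∫ θ in t..(Real.pi - A), s11ig m θ) = Gw (Real.pi - A) m := by
          rw [Gw_eq, Gw_eq]
          exact intervalIntegral.integral_add_adjacent_intervals
            (s11ig_int hm0' hm1' _ _) (s11ig_int hm0' hm1' _ _)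
        have hint : ∫ θ in t..(Real.pi - A), s11ig m θ ≤ 0 := by
          rw [← neg_nonneg, ← intervalIntegral.integral_neg]
          apply intervalIntegral.integral_nonneg h2
          rintro θ ⟨hθ1, hθ2⟩
          rw [neg_nonneg]
          apply s11ig_nonpos
          have hsin : Real.sin A ≤ Real.sin θ :=
            s11_sin_ge hA0.le hA2 (by linarith) (by linarith)
          have hsA : 0 ≤ Real.sin A := Real.sin_nonneg_of_nonneg_of_le_pi hA0.le (by linarith)
          have hsq : Real.sin A ^ 2 ≤ Real.sin θ ^ 2 := pow_le_pow_left₀ hsA hsin 2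
          nlinarith [mul_le_mul_of_nonneg_left hsq hm0']
        linarith
      · have adj : Gw (Real.pi - A) m + (∫ θ in (Real.pi - A)..t, s11ig m θ) = Gw t m := by
          rw [Gw_eq, Gw_eq]
          exact intervalIntegral.integral_add_adjacent_intervals
            (s11ig_int hm0' hm1' _ _) (s11ig_int hm0' hm1' _ _)
        have hint : 0 ≤ ∫ θ in (Real.pi - A)..t, s11ig m θ := by
          apply intervalIntegral.integral_nonneg h2.le
          rintro θ ⟨hθ1, hθ2⟩
          apply s11ig_nonneg
          have hsin : Real.sin θ ≤ Real.sin A := s11_sin_le hA0.le hA2 hθ1 (by linarith)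
          have hsθ : 0 ≤ Real.sin θ :=
            Real.sin_nonneg_of_nonneg_of_le_pi (by linarith) (by linarith)
          have hsq : Real.sin θ ^ 2 ≤ Real.sin A ^ 2 := pow_le_pow_left₀ hsθ hsin 2
          nlinarith [mul_le_mul_of_nonneg_left hsq hm0']
        linarith

/-- positivity of `Gw t m` for all `t > 0`. -/
lemma s11_GposAll {m mq : ℝ} (hmq : mq ∈ Set.Ioo (1/2 : ℝ) 1) (hz : fT mq = 0)
    (hm0 : 0 < m) (hm1 : m < mq) {t : ℝ} (ht0 : 0 < t) : 0 < Gw t m := by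
  have hπ := Real.pi_pos
  have hm1' : m < 1 := hm1.trans hmq.2
  set n : ℤ := ⌈t / Real.pi⌉ - 1 with hn
  have h1 : t / Real.pi ≤ (⌈t / Real.pi⌉ : ℝ) := Int.le_ceil _
  have h2 : (⌈t / Real.pi⌉ : ℝ) < t / Real.pi + 1 := Int.ceil_lt_add_one _
  have hn0 : (0:ℤ) ≤ n := by
    have : (0:ℤ) < ⌈t / Real.pi⌉ := Int.ceil_pos.mpr (div_pos ht0 hπ)
    omega
  have hnR : (n : ℝ) = (⌈t / Real.pi⌉ : ℝ) - 1 := by rw [hn]; push_cast; ring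
  have hr0 : 0 < t - n * Real.pi := by
    have h4 : (n : ℝ) < t / Real.pi := by rw [hnR]; linarith
    have := (lt_div_iff₀ hπ).mp h4
    linarith
  have hrπ : t - n * Real.pi ≤ Real.pi := by
    have h4 : t / Real.pi ≤ (n : ℝ) + 1 := by rw [hnR]; linarith
    have := (div_le_iff₀ hπ).mp h4
    linarith
  have key : Gw t m = Gw (t - n * Real.pi) m + n * Gw Real.pi m := by
    have h3 := Gw_add_int_pi hm0.le hm1' n (t - n * Real.pi)
    rw [show t - n * Real.pi + (n : ℝ) * Real.pi = t by ring] at h3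
    exact h3
  have hGr : 0 < Gw (t - n * Real.pi) m := s11_Gpos hmq hz hm0 hm1 hr0 hrπ
  have hGπ : 0 < Gw Real.pi m := s11_Gpos hmq hz hm0 hm1 hπ le_rfl
  have : 0 ≤ (n : ℝ) * Gw Real.pi m :=
    mul_nonneg (by exact_mod_cast hn0) hGπ.le
  linarith

/-- Lemma 2.18: for `0 < m < m_T`, the wavelike parametrization
`γ_w(·|m)` is injective on all of `ℝ`; in particular it has no self-intersection. -/
theorem stmt11 (mT : ℝ) (hmT : mT ∈ Set.Ioo (1/2 : ℝ) 1) (hmTzero : fT mT = 0)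
    (m : ℝ) (hm0 : 0 < m) (hm1 : m < mT) :
    Function.Injective (gammaW m) := by
  have hπ := Real.pi_pos
  have hm1' : m < 1 := hm1.trans hmT.2
  have hm0' : (0:ℝ) ≤ m := hm0.le
  have hP : 0 < Gw Real.pi m := s11_Gpos hmT hmTzero hm0 hm1 hπ le_rfl
  have hzero : ∀ t : ℝ, Gw t m = 0 → t = 0 := by
    intro t h
    rcases lt_trichotomy t 0 with h1 | h1 | h1
    · exfalso
      have h2 : 0 < Gw (-t) m := s11_GposAll hmT hmTzero hm0 hm1 (by linarith)
      rw [Gw_neg, h] at h2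
      simp at h2
    · exact h1
    · exfalso
      have h2 : 0 < Gw t m := s11_GposAll hmT hmTzero hm0 hm1 h1
      rw [h] at h2; exact lt_irrefl 0 h2
  intro x y hxy
  have hcomp0 : Gw x m = Gw y m := by
    have := congrArg (fun v : E2 => v 0) hxy
    exact this
  have hcomp1 : -2 * Real.sqrt m * Real.cos x = -2 * Real.sqrt m * Real.cos y := by
    have := congrArg (fun v : E2 => v 1) hxy
    exact this
  have hcos : Real.cos x = Real.cos y := by
    have hne : (-2 : ℝ) * Real.sqrt m ≠ 0 := by
      have : 0 < Real.sqrt m := Real.sqrt_pos.mpr hm0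
      intro hcon
      nlinarith
    exact mul_left_cancel₀ hne hcomp1
  rcases Real.cos_eq_cos_iff.mp hcos with ⟨k, hk | hk⟩
  · -- y = 2kπ + x
    have e : Gw y m = Gw x m + ((2 * k : ℤ) : ℝ) * Gw Real.pi m := by
      have h3 := Gw_add_int_pi hm0' hm1' (2 * k) x
      rw [show x + ((2 * k : ℤ) : ℝ) * Real.pi = y by push_cast; rw [hk]; ring] at h3
      exact h3
    have hk0 : ((2 * k : ℤ) : ℝ) * Gw Real.pi m = 0 := by
      rw [e] at hcomp0; linarith
    have hkz : ((2 * k : ℤ) : ℝ) = 0 := by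
      rcases mul_eq_zero.mp hk0 with h | h
      · exact h
      · exact absurd h hP.ne'
    have : (k : ℝ) = 0 := by push_cast at hkz; linarith
    rw [hk, this]; ring
  · -- y = 2kπ - x
    have e : Gw y m = -Gw x m + ((2 * k : ℤ) : ℝ) * Gw Real.pi m := by
      have h3 := Gw_add_int_pi hm0' hm1' (2 * k) (-x)
      rw [Gw_neg] at h3
      rw [show -x + ((2 * k : ℤ) : ℝ) * Real.pi = y by push_cast; rw [hk]; ring] at h3
      exact h3
    have e2 : Gw x m = (k : ℝ) * Gw Real.pi m := by
      rw [e] at hcomp0; push_cast at hcomp0; linarith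
    have e3 : Gw (x - k * Real.pi) m = 0 := by
      have h3 := Gw_add_int_pi hm0' hm1' (-k) x
      rw [show x + ((-k : ℤ) : ℝ) * Real.pi = x - (k : ℝ) * Real.pi by push_cast; ring] at h3
      rw [h3]; push_cast; linarith
    have hx : x = (k : ℝ) * Real.pi := by
      have := hzero _ e3; linarith
    rw [hk, hx]; ring
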